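/- With the notation of the context, for every particle array v ∈ Z^{T·M} and every index path k ∈ {1,…,M}^T one has ψ(s_{1,k}(v)) · Ĉ(s_{1,k}(v)) = ψ(v) · Ĉ(v); that is, the particle-filter density reweighted by the normalising-constant estimator is invariant under swapping the first path with the path indexed by k. -/
import Mathlib


open MeasureTheory Finset

namespace SSM13

variable {Z : Type*}

/-- The swap operator `s_{1,k}`. -/
def swapArr (n m : ℕ) (k : Fin (n + 1) → Fin (m + 1))
    (v : Fin (n + 1) → Fin (m + 1) → Z) : Fin (n + 1) → Fin (m + 1) → Z :=
  fun t i => v t (Equiv.swap 0 (k t) i)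

/-- The particle-filter density `ψ(v)`. -/
noncomputable def psiPF (n m : ℕ) (m₀ : Z → ℝ) (f : Z → Z → ℝ)
    (w : Fin (n + 1) → Z → ℝ) (v : Fin (n + 1) → Fin (m + 1) → Z) : ℝ :=
  (∏ i, m₀ (v 0 i)) *
    ∏ t : Fin n, ∏ i : Fin (m + 1),
      (∑ j, w t.castSucc (v t.castSucc j) * f (v t.castSucc j) (v t.succ i)) /
        ∑ j, w t.castSucc (v t.castSucc j)

/-- The normalising-constant estimator `Ĉ(v)`. -/
noncomputable def Chat (n m : ℕ) (w : Fin (n + 1) → Z → ℝ)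
    (v : Fin (n + 1) → Fin (m + 1) → Z) : ℝ :=
  ∏ t, ((m : ℝ) + 1)⁻¹ * ∑ i, w t (v t i)

/-- For every particle array `v` and index path `k`,
`ψ(s_{1,k}(v)) · Ĉ(s_{1,k}(v)) = ψ(v) · Ĉ(v)`. -/
theorem psi_Chat_swap_invariance
    [MeasurableSpace Z] (n m : ℕ)
    (m₀ : Z → ℝ) (f : Z → Z → ℝ) (w : Fin (n + 1) → Z → ℝ)
    (hm₀ : Measurable m₀) (hf : Measurable fun p : Z × Z => f p.1 p.2)
    (hw : ∀ t, Measurable (w t))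
    (hm₀pos : ∀ z, 0 < m₀ z) (hfpos : ∀ z z', 0 < f z z') (hwpos : ∀ t z, 0 < w t z)
    (v : Fin (n + 1) → Fin (m + 1) → Z) (k : Fin (n + 1) → Fin (m + 1)) :
    psiPF n m m₀ f w (swapArr n m k v) * Chat n m w (swapArr n m k v)
      = psiPF n m m₀ f w v * Chat n m w v := by
  have hC : Chat n m w (swapArr n m k v) = Chat n m w v := by
    unfold Chat swapArr
    refine Finset.prod_congr rfl fun t _ => ?_
    congr 1
    exact Fintype.sum_equiv (Equiv.swap 0 (k t)) _ _ fun i => rfl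
  have hP : psiPF n m m₀ f w (swapArr n m k v) = psiPF n m m₀ f w v := by
    unfold psiPF swapArr
    congr 1
    · exact Fintype.prod_equiv (Equiv.swap 0 (k 0)) _ _ fun i => rfl
    · refine Finset.prod_congr rfl fun t _ => ?_
      have hs : ∀ x : Z,
          (∑ j, w t.castSucc (v t.castSucc (Equiv.swap 0 (k t.castSucc) j)) *
              f (v t.castSucc (Equiv.swap 0 (k t.castSucc) j)) x)
            = ∑ j, w t.castSucc (v t.castSucc j) * f (v t.castSucc j) x :=
        fun x => Fintype.sum_equiv (Equiv.swap 0 (k t.castSucc)) _ _ fun j => rfl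
      have hd : (∑ j, w t.castSucc (v t.castSucc (Equiv.swap 0 (k t.castSucc) j)))
          = ∑ j, w t.castSucc (v t.castSucc j) :=
        Fintype.sum_equiv (Equiv.swap 0 (k t.castSucc)) _ _ fun j => rfl
      calc (∏ i : Fin (m + 1),
            (∑ j, w t.castSucc (v t.castSucc (Equiv.swap 0 (k t.castSucc) j)) *
                f (v t.castSucc (Equiv.swap 0 (k t.castSucc) j))
                  (v t.succ (Equiv.swap 0 (k t.succ) i))) /
              ∑ j, w t.castSucc (v t.castSucc (Equiv.swap 0 (k t.castSucc) j)))
          = ∏ i : Fin (m + 1),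
            (∑ j, w t.castSucc (v t.castSucc j) *
                f (v t.castSucc j) (v t.succ (Equiv.swap 0 (k t.succ) i))) /
              ∑ j, w t.castSucc (v t.castSucc j) := by
            refine Finset.prod_congr rfl fun i _ => ?_
            rw [hs, hd]
        _ = _ := Fintype.prod_equiv (Equiv.swap 0 (k t.succ)) _ _ fun i => rfl
  rw [hC, hP]

end SSM13
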